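/- Suppose S ⊆ ℂ^N is a decoherence-free subspace: S is invariant under H (H x ∈ S for all x ∈ S), and for every density matrix ρ with supp(ρ) ⊆ S the dissipative part vanishes, Σ_d (V_d ρ V_d† - ½(V_d† V_d ρ + ρ V_d† V_d)) = 0. Then every density matrix ρ with supp(ρ) ⊆ S belongs to the invariant set: ρ lies in the subspace E_cc of M_N(ℂ) spanned by all eigenspaces of 𝓛 corresponding to eigenvalues with zero real part. -/

import Mathlib

open Matrix
open scoped ComplexOrder InnerProductSpace
set_option maxHeartbeats 1000000

attribute [local instance] Matrix.normedAddCommGroup Matrix.normedSpace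

/-- The Lindblad generator `𝓛(ρ) = -i[H,ρ] + Σ_d (V_d ρ V_d† - ½(V_d† V_d ρ + ρ V_d† V_d))`,
as a `ℂ`-linear endomorphism of the matrix space. -/
noncomputable def lindbladOp {n : Type*} [Fintype n] [DecidableEq n] {ι : Type*} [Fintype ι]
    (H : Matrix n n ℂ) (V : ι → Matrix n n ℂ) :
    Matrix n n ℂ →ₗ[ℂ] Matrix n n ℂ where
  toFun ρ := -Complex.I • (H * ρ - ρ * H) +
    ∑ d, (V d * ρ * (V d)ᴴ - (1 / 2 : ℂ) • ((V d)ᴴ * V d * ρ + ρ * ((V d)ᴴ * V d)))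
  map_add' x y := by
    simp only [mul_add, add_mul, smul_add, sub_eq_add_neg, neg_add,
      Finset.sum_add_distrib, Finset.sum_neg_distrib]
    abel
  map_smul' c x := by
    simp only [Matrix.mul_smul, Matrix.smul_mul, smul_sub, smul_add, Finset.smul_sum,
      smul_comm c, RingHom.id_apply]

/-- A density matrix: positive semidefinite with trace one. -/
def IsDensityMatrix {n : Type*} [Fintype n] (ρ : Matrix n n ℂ) : Prop :=
  ρ.PosSemidef ∧ ρ.trace = 1

/-- A steady state of the Lindblad dynamics. -/
noncomputable def IsSteadyState {n : Type*} [Fintype n] [DecidableEq n] {ι : Type*} [Fintype ι]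
    (H : Matrix n n ℂ) (V : ι → Matrix n n ℂ) (ρ : Matrix n n ℂ) : Prop :=
  IsDensityMatrix ρ ∧ lindbladOp H V ρ = 0

/-- The support of a matrix: its range as a linear map `ℂ^N → ℂ^N`. -/
noncomputable def matSupport {n : Type*} [Fintype n] (ρ : Matrix n n ℂ) :
    Submodule ℂ (n → ℂ) :=
  LinearMap.range ρ.mulVecLin

/-- Time evolution `ρ(t) = exp(t𝓛)(ρ₀)`. -/
noncomputable def evolve {n : Type*} [Fintype n] [DecidableEq n] {ι : Type*} [Fintype ι]
    (H : Matrix n n ℂ) (V : ι → Matrix n n ℂ) (t : ℝ) (ρ : Matrix n n ℂ) : Matrix n n ℂ :=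
  haveI : IsTopologicalRing (Matrix n n ℂ →L[ℂ] Matrix n n ℂ) := by
    letI : NormedRing (Matrix n n ℂ →L[ℂ] Matrix n n ℂ) := ContinuousLinearMap.toNormedRing
    exact NonUnitalSeminormedRing.toIsTopologicalRing
  NormedSpace.exp ((t : ℂ) • (LinearMap.toContinuousLinearMap (lindbladOp H V))) ρ

/-- The subspace of `M_N(ℂ)` spanned by all eigenspaces of `𝓛` corresponding to
eigenvalues with zero real part. -/
noncomputable def Ecc {n : Type*} [Fintype n] [DecidableEq n] {ι : Type*} [Fintype ι]
    (H : Matrix n n ℂ) (V : ι → Matrix n n ℂ) : Submodule ℂ (Matrix n n ℂ) :=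
  ⨆ γ ∈ {γ : ℂ | γ.re = 0 ∧ Module.End.HasEigenvalue (lindbladOp H V) γ},
    Module.End.eigenspace (lindbladOp H V) γ

section DFSHelpers

variable {N : ℕ} {ι : Type*} [Fintype ι]

lemma vmv_mulVec (x y z : Fin N → ℂ) :
    (vecMulVec x y).mulVec z = (y ⬝ᵥ z) • x := by
  ext i
  simp [Matrix.mulVec, dotProduct, vecMulVec_apply, Finset.sum_mul, Finset.mul_sum,
    mul_assoc, mul_comm, mul_left_comm]

lemma vmv_star_posSemidef (z : Fin N → ℂ) : (vecMulVec z (star z)).PosSemidef := by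
  rw [Matrix.posSemidef_iff_dotProduct_mulVec]
  constructor
  · ext i j
    simp [Matrix.conjTranspose_apply, vecMulVec_apply, mul_comm]
  · intro x
    rw [vmv_mulVec]
    have h1 : star x ⬝ᵥ (star z ⬝ᵥ x) • z = (star z ⬝ᵥ x) * (star x ⬝ᵥ z) := by
      simp [dotProduct_smul, mul_comm]
    rw [h1]
    have h2 : star x ⬝ᵥ z = star (star z ⬝ᵥ x) := by
      simp [dotProduct, Pi.star_apply, star_sum, mul_comm]
    rw [h2]
    exact mul_star_self_nonneg _

lemma smul_posSemidef {M : Matrix (Fin N) (Fin N) ℂ} (hM : M.PosSemidef) {t : ℝ} (ht : 0 ≤ t) :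
    ((t : ℂ) • M).PosSemidef := by
  rw [Matrix.posSemidef_iff_dotProduct_mulVec]
  constructor
  · show ((t:ℂ) • M)ᴴ = _
    rw [Matrix.conjTranspose_smul, hM.1.eq, Complex.star_def, Complex.conj_ofReal]
  · intro x
    rw [Matrix.smul_mulVec, dotProduct_smul]
    have h0 : (0:ℂ) ≤ (t:ℂ) := by
      rw [Complex.zero_le_real]; exact ht
    exact mul_nonneg h0 (hM.dotProduct_mulVec_nonneg x)

lemma vmv_star_trace (z : Fin N → ℂ) :
    (vecMulVec z (star z)).trace = ((∑ i, Complex.normSq (z i) : ℝ) : ℂ) := by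
  simp [Matrix.trace, Matrix.diag, vecMulVec_apply, Complex.mul_conj]

lemma lindbladOp_apply' (H : Matrix (Fin N) (Fin N) ℂ) (V : ι → Matrix (Fin N) (Fin N) ℂ)
    (ρ : Matrix (Fin N) (Fin N) ℂ) :
    lindbladOp H V ρ = -Complex.I • (H * ρ - ρ * H) +
      ∑ d, (V d * ρ * (V d)ᴴ - (1 / 2 : ℂ) • ((V d)ᴴ * V d * ρ + ρ * ((V d)ᴴ * V d))) := rfl

lemma lindbladOp_zero_apply (V : ι → Matrix (Fin N) (Fin N) ℂ) (ρ : Matrix (Fin N) (Fin N) ℂ) :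
    lindbladOp (0 : Matrix (Fin N) (Fin N) ℂ) V ρ =
      ∑ d, (V d * ρ * (V d)ᴴ - (1 / 2 : ℂ) • ((V d)ᴴ * V d * ρ + ρ * ((V d)ᴴ * V d))) := by
  simp [lindbladOp_apply']

lemma diss_vmv_self_zero (V : ι → Matrix (Fin N) (Fin N) ℂ) (S : Submodule ℂ (Fin N → ℂ))
    (hdiss : ∀ ρ : Matrix (Fin N) (Fin N) ℂ, IsDensityMatrix ρ → matSupport ρ ≤ S →
      ∑ d, (V d * ρ * (V d)ᴴ - (1 / 2 : ℂ) • ((V d)ᴴ * V d * ρ + ρ * ((V d)ᴴ * V d))) = 0)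
    {z : Fin N → ℂ} (hz : z ∈ S) :
    lindbladOp 0 V (vecMulVec z (star z)) = 0 := by
  by_cases h0 : z = 0
  · have : vecMulVec z (star z) = 0 := by
      ext i j; simp [vecMulVec_apply, h0]
    rw [this, map_zero]
  · set M := vecMulVec z (star z) with hM
    set t : ℝ := ∑ i, Complex.normSq (z i) with htdef
    have ht : 0 < t := by
      obtain ⟨i, hi⟩ : ∃ i, z i ≠ 0 := by
        by_contra h; push_neg at h; exact h0 (funext h)
      exact Finset.sum_pos' (fun j _ => Complex.normSq_nonneg _)
        ⟨i, Finset.mem_univ i, Complex.normSq_pos.mpr hi⟩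
    have htne : ((t : ℝ) : ℂ) ≠ 0 := by
      exact_mod_cast ne_of_gt ht
    set ρ0 : Matrix (Fin N) (Fin N) ℂ := ((t:ℂ))⁻¹ • M with hρ0
    have hdens : IsDensityMatrix ρ0 := by
      constructor
      · have := smul_posSemidef (vmv_star_posSemidef z) (t := t⁻¹) (le_of_lt (inv_pos.mpr ht))
        rwa [Complex.ofReal_inv] at this
      · rw [hρ0, Matrix.trace_smul, hM, vmv_star_trace, ← htdef]
        simp [inv_mul_cancel₀ htne]
    have hsupp : matSupport ρ0 ≤ S := by
      rintro y ⟨x, rfl⟩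
      show ρ0.mulVec x ∈ S
      rw [hρ0, Matrix.smul_mulVec, hM, vmv_mulVec]
      exact Submodule.smul_mem _ _ (Submodule.smul_mem _ _ hz)
    have h := hdiss ρ0 hdens hsupp
    rw [← lindbladOp_zero_apply] at h
    have h2 : lindbladOp 0 V M = (t:ℂ) • lindbladOp 0 V ρ0 := by
      rw [hρ0, _root_.map_smul, smul_smul, mul_inv_cancel₀ htne, one_smul]
    rw [h2, h, smul_zero]

lemma polarization (x y : Fin N → ℂ) :
    vecMulVec x (star y) = (4:ℂ)⁻¹ • ((1:ℂ) • vecMulVec (x+(1:ℂ)•y) (star (x+(1:ℂ)•y))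
      + Complex.I • vecMulVec (x+Complex.I•y) (star (x+Complex.I•y))
      + (-1:ℂ) • vecMulVec (x+(-1:ℂ)•y) (star (x+(-1:ℂ)•y))
      + (-Complex.I) • vecMulVec (x+(-Complex.I)•y) (star (x+(-Complex.I)•y))) := by
  ext i j
  simp only [vecMulVec_apply, Matrix.smul_apply, Matrix.add_apply, Pi.star_apply, Pi.add_apply,
    Pi.smul_apply, smul_eq_mul, Complex.star_def, map_add, _root_.map_mul, Complex.conj_I,
    _root_.map_one, _root_.map_neg]
  ring_nf
  simp only [Complex.I_sq]
  ring

lemma diss_vmv_pair_zero (V : ι → Matrix (Fin N) (Fin N) ℂ) (S : Submodule ℂ (Fin N → ℂ))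
    (hdiss : ∀ ρ : Matrix (Fin N) (Fin N) ℂ, IsDensityMatrix ρ → matSupport ρ ≤ S →
      ∑ d, (V d * ρ * (V d)ᴴ - (1 / 2 : ℂ) • ((V d)ᴴ * V d * ρ + ρ * ((V d)ᴴ * V d))) = 0)
    {x y : Fin N → ℂ} (hx : x ∈ S) (hy : y ∈ S) :
    lindbladOp 0 V (vecMulVec x (star y)) = 0 := by
  have key : ∀ c : ℂ, lindbladOp 0 V (vecMulVec (x + c • y) (star (x + c • y))) = 0 :=
    fun c => diss_vmv_self_zero V S hdiss (S.add_mem hx (S.smul_mem c hy))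
  rw [polarization x y, _root_.map_smul]
  simp only [map_add, _root_.map_smul, key, smul_zero, add_zero, zero_add]

lemma mul_vmv (H : Matrix (Fin N) (Fin N) ℂ) (x y : Fin N → ℂ) :
    H * vecMulVec x y = vecMulVec (H.mulVec x) y := by
  ext i j
  simp [Matrix.mul_apply, vecMulVec_apply, Matrix.mulVec, dotProduct,
    Finset.sum_mul, mul_assoc]

lemma vmv_mul (H : Matrix (Fin N) (Fin N) ℂ) (x y : Fin N → ℂ) :
    vecMulVec x y * H = vecMulVec x (Matrix.vecMul y H) := by
  ext i j
  simp [Matrix.mul_apply, vecMulVec_apply, Matrix.vecMul, dotProduct,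
    Finset.mul_sum, mul_assoc]

lemma vmv_mul_vmv (a b c d : Fin N → ℂ) :
    vecMulVec a b * vecMulVec c d = (b ⬝ᵥ c) • vecMulVec a d := by
  ext i j
  simp only [Matrix.mul_apply, vecMulVec_apply, Matrix.smul_apply, dotProduct,
    smul_eq_mul, Finset.sum_mul]
  exact Finset.sum_congr rfl fun l _ => by ring

lemma vmv_mul_mul_vmv (a b c d : Fin N → ℂ) (M : Matrix (Fin N) (Fin N) ℂ) :
    vecMulVec a b * M * vecMulVec c d = (b ⬝ᵥ M.mulVec c) • vecMulVec a d := by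
  rw [vmv_mul, vmv_mul_vmv, dotProduct_mulVec]

lemma vecMul_star_hermitian {H : Matrix (Fin N) (Fin N) ℂ} (hH : H.IsHermitian)
    (u : Fin N → ℂ) : Matrix.vecMul (star u) H = star (H.mulVec u) := by
  ext j
  simp only [Matrix.vecMul, Matrix.mulVec, dotProduct, Pi.star_apply, star_sum, star_mul']
  refine Finset.sum_congr rfl fun c _ => ?_
  rw [← hH.apply c j]
  simp [Matrix.conjTranspose_apply, mul_comm]

lemma vmv_smul_left (c : ℂ) (x y : Fin N → ℂ) :
    vecMulVec (c • x) y = c • vecMulVec x y := by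
  ext i j; simp [vecMulVec_apply, mul_assoc]

lemma vmv_smul_right (c : ℂ) (x y : Fin N → ℂ) :
    vecMulVec x (c • y) = c • vecMulVec x y := by
  ext i j; simp [vecMulVec_apply]; ring

lemma eigvec_pair_mem_Ecc (H : Matrix (Fin N) (Fin N) ℂ) (hH : H.IsHermitian)
    (V : ι → Matrix (Fin N) (Fin N) ℂ) (S : Submodule ℂ (Fin N → ℂ))
    (hdiss : ∀ ρ : Matrix (Fin N) (Fin N) ℂ, IsDensityMatrix ρ → matSupport ρ ≤ S →
      ∑ d, (V d * ρ * (V d)ᴴ - (1 / 2 : ℂ) • ((V d)ᴴ * V d * ρ + ρ * ((V d)ᴴ * V d))) = 0)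
    {w u : Fin N → ℂ} {μ ν : ℝ} (hw : w ∈ S) (hu : u ∈ S)
    (hμ : H.mulVec w = ((μ:ℂ)) • w) (hν : H.mulVec u = ((ν:ℂ)) • u) :
    vecMulVec w (star u) ∈ Ecc H V := by
  set A := vecMulVec w (star u) with hA
  set γ : ℂ := -Complex.I * ((μ:ℂ) - (ν:ℂ)) with hγ
  have hLA : lindbladOp H V A = γ • A := by
    have hsplit : lindbladOp H V A = -Complex.I • (H * A - A * H) + lindbladOp 0 V A := by
      rw [lindbladOp_zero_apply, lindbladOp_apply']
    rw [hsplit, diss_vmv_pair_zero V S hdiss hw hu, add_zero, hA, mul_vmv, vmv_mul,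
      vecMul_star_hermitian hH, hμ, hν]
    have hstar : star (((ν:ℂ)) • u) = ((ν:ℂ)) • star u := by
      ext i; simp [Pi.star_apply, Complex.star_def, Complex.conj_ofReal]
    rw [hstar, vmv_smul_left, vmv_smul_right, ← sub_smul, smul_smul, hγ]
  have hre : γ.re = 0 := by
    simp [hγ, Complex.mul_re]
  by_cases h0 : A = 0
  · rw [h0]; exact Submodule.zero_mem _
  · have hmem : A ∈ Module.End.eigenspace (lindbladOp H V) γ :=
      Module.End.mem_eigenspace_iff.mpr hLA
    have hev : Module.End.HasEigenvalue (lindbladOp H V) γ :=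
      Module.End.hasEigenvalue_of_hasEigenvector ⟨hmem, h0⟩
    exact Submodule.mem_iSup_of_mem γ (Submodule.mem_iSup_of_mem ⟨hre, hev⟩ hmem)

lemma matrix_eq_of_mulVec_eq {A B : Matrix (Fin N) (Fin N) ℂ}
    (h : ∀ x, A.mulVec x = B.mulVec x) : A = B := by
  exact Matrix.toLin'.injective (LinearMap.ext fun x => by
    simpa [Matrix.toLin'_apply] using h x)


end DFSHelpers

/-- Every density matrix supported on a decoherence-free subspace belongs to the
invariant set `E_cc`. -/
theorem dfs_states_in_invariant_set (N : ℕ) (hN : 1 ≤ N)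
    (H : Matrix (Fin N) (Fin N) ℂ) (hH : H.IsHermitian)
    {ι : Type*} [Fintype ι] (V : ι → Matrix (Fin N) (Fin N) ℂ)
    (S : Submodule ℂ (Fin N → ℂ))
    (hHS : ∀ x ∈ S, H.mulVec x ∈ S)
    (hdiss : ∀ ρ : Matrix (Fin N) (Fin N) ℂ, IsDensityMatrix ρ → matSupport ρ ≤ S →
      ∑ d, (V d * ρ * (V d)ᴴ - (1 / 2 : ℂ) • ((V d)ᴴ * V d * ρ + ρ * ((V d)ᴴ * V d))) = 0) :
    ∀ ρ : Matrix (Fin N) (Fin N) ℂ, IsDensityMatrix ρ → matSupport ρ ≤ S →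
      ρ ∈ Ecc H V := by
  intro ρ hρ hsupp
  classical
  -- move to EuclideanSpace
  set e : EuclideanSpace ℂ (Fin N) ≃ₗ[ℂ] (Fin N → ℂ) := WithLp.linearEquiv 2 ℂ (Fin N → ℂ) with he
  set S' : Submodule ℂ (EuclideanSpace ℂ (Fin N)) := S.comap e.toLinearMap with hS'
  have hmemS' : ∀ x : EuclideanSpace ℂ (Fin N), x ∈ S' ↔ e x ∈ S := fun x => Iff.rfl
  have hinv : ∀ x ∈ S', Matrix.toEuclideanLin H x ∈ S' := by
    intro x hx
    rw [hmemS'] at hx ⊢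
    have : e (Matrix.toEuclideanLin H x) = H.mulVec (e x) := rfl
    rw [this]
    exact hHS _ hx
  letI i0 : NormedAddCommGroup ↥S' := S'.normedAddCommGroup
  letI i1 : SeminormedAddCommGroup ↥S' := i0.toSeminormedAddCommGroup
  letI i2 : InnerProductSpace ℂ ↥S' := S'.innerProductSpace
  have hTsym : ((Matrix.toEuclideanLin H).restrict hinv).IsSymmetric :=
    (Matrix.isHermitian_iff_isSymmetric.mp hH).restrict_invariant hinv
  set n : ℕ := Module.finrank ℂ S' with hn
  set b := hTsym.eigenvectorBasis rfl with hb
  set μ := hTsym.eigenvalues rfl with hμ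
  set w : Fin n → (Fin N → ℂ) := fun i => e ((b i : EuclideanSpace ℂ (Fin N))) with hw
  have hwS : ∀ i, w i ∈ S := fun i => (b i).2
  have hweig : ∀ i, H.mulVec (w i) = ((μ i : ℂ)) • w i := by
    intro i
    have h1 := hTsym.apply_eigenvectorBasis rfl i
    have h2 : ((Matrix.toEuclideanLin H).restrict hinv (b i) : EuclideanSpace ℂ (Fin N))
        = Matrix.toEuclideanLin H (b i : EuclideanSpace ℂ (Fin N)) :=
      LinearMap.restrict_coe_apply _ _ _
    have h3 : Matrix.toEuclideanLin H ((b i : EuclideanSpace ℂ (Fin N)))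
        = ((μ i : ℂ)) • (b i : EuclideanSpace ℂ (Fin N)) := by
      rw [← h2, h1]; rfl
    have h4 := congrArg e h3
    rw [_root_.map_smul] at h4
    exact h4
  -- orthonormal expansion
  have hexp : ∀ z ∈ S, ∑ i, (star (w i) ⬝ᵥ z) • w i = z := by
    intro z hz
    set s : S' := ⟨e.symm z, by rw [hmemS']; simpa using hz⟩ with hs
    have h1 := b.sum_repr' s
    have hinner : ∀ i, (⟪b i, s⟫_ℂ) = star (w i) ⬝ᵥ z := by
      intro i
      rw [Submodule.coe_inner]
      rw [PiLp.inner_apply]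
      simp only [RCLike.inner_apply]
      simp [dotProduct, hw, hs, he, mul_comm]
    have h2 := congrArg (fun v : S' => e (v : EuclideanSpace ℂ (Fin N))) h1
    rw [Submodule.coe_sum] at h2
    rw [map_sum] at h2
    have h3 : ∀ i, e ((⟪b i, s⟫_ℂ • b i : S') : EuclideanSpace ℂ (Fin N))
        = (star (w i) ⬝ᵥ z) • w i := by
      intro i
      rw [Submodule.coe_smul, _root_.map_smul, hinner]
    rw [Finset.sum_congr rfl fun i _ => h3 i] at h2
    have h4 : e ((s : EuclideanSpace ℂ (Fin N))) = z := by
      simp [hs]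
    rw [h4] at h2
    exact h2
  -- the projection onto S
  set P : Matrix (Fin N) (Fin N) ℂ := ∑ i, vecMulVec (w i) (star (w i)) with hP
  have hsummv : ∀ z, P.mulVec z = ∑ i, (star (w i) ⬝ᵥ z) • w i := by
    intro z
    rw [hP]
    have : (∑ i, vecMulVec (w i) (star (w i))).mulVec z
        = ∑ i, (vecMulVec (w i) (star (w i))).mulVec z := by
      ext j
      simp only [Matrix.mulVec, dotProduct, Matrix.sum_apply, Finset.sum_apply,
        Finset.sum_mul]
      rw [Finset.sum_comm]
    rw [this]
    exact Finset.sum_congr rfl fun i _ => vmv_mulVec _ _ _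
  have hPz : ∀ z ∈ S, P.mulVec z = z := by
    intro z hz
    rw [hsummv]
    exact hexp z hz
  have hρmem : ∀ x, ρ.mulVec x ∈ S := by
    intro x
    exact hsupp (LinearMap.mem_range.mpr ⟨x, by simp [Matrix.mulVecLin_apply]⟩)
  have hPρ : P * ρ = ρ := by
    apply matrix_eq_of_mulVec_eq
    intro x
    rw [← Matrix.mulVec_mulVec]
    exact hPz _ (hρmem x)
  have hPH : Pᴴ = P := by
    rw [hP, Matrix.conjTranspose_sum]
    exact Finset.sum_congr rfl fun i _ => (vmv_star_posSemidef (w i)).1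
  have hρH : ρᴴ = ρ := hρ.1.1
  have hρP : ρ * P = ρ := by
    have := congrArg Matrix.conjTranspose hPρ
    rwa [Matrix.conjTranspose_mul, hPH, hρH] at this
  have h2 : P * ρ * P = ∑ i, ∑ j,
      (star (w i) ⬝ᵥ ρ.mulVec (w j)) • vecMulVec (w i) (star (w j)) := by
    rw [hP]
    simp only [Finset.sum_mul, Finset.mul_sum]
    rw [Finset.sum_comm]
    refine Finset.sum_congr rfl fun i _ => Finset.sum_congr rfl fun j _ => ?_
    exact vmv_mul_mul_vmv _ _ _ _ _
  have hdecomp : ρ = ∑ i, ∑ j,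
      (star (w i) ⬝ᵥ ρ.mulVec (w j)) • vecMulVec (w i) (star (w j)) := by
    rw [← h2, hPρ, hρP]
  rw [hdecomp]
  refine Submodule.sum_mem _ fun i _ => Submodule.sum_mem _ fun j _ => ?_
  exact Submodule.smul_mem _ _
    (eigvec_pair_mem_Ecc H hH V S hdiss (hwS i) (hwS j) (hweig i) (hweig j))
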